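/- arXiv:1502.01255 — 2 statements merged into one kernel-verified Lean document; each statement's English description precedes it below -/
import Mathlib

section
/- Let G be a finite (possibly vertex-colored) simple graph with adjacency matrix A, and let X be a fractional automorphism of G, i.e., a doubly stochastic matrix with AX = XA (and X[u,v] = 0 whenever u and v have different colors). Then X is block-diagonal with respect to the stable partition of G: X[u,v] = 0 whenever u and v lie in different cells of Π_G. -/
namespace ColorRef

variable {V W : Type}

/-- `crRel G c i u v` means vertices `u` and `v` get the same color in round `i`
of color refinement on `G` with initial coloring `c`. -/
def crRel (G : SimpleGraph V) {α : Type} (c : V → α) : ℕ → V → V → Prop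
  | 0 => fun u v => c u = c v
  | (i + 1) => fun u v => crRel G c i u v ∧
      ∀ w : V, {a : V | G.Adj u a ∧ crRel G c i a w}.ncard =
               {a : V | G.Adj v a ∧ crRel G c i a w}.ncard

/-- `u` and `v` get the same color in the stable coloring. -/
def stableRel (G : SimpleGraph V) {α : Type} (c : V → α) (u v : V) : Prop :=
  ∀ i : ℕ, crRel G c i u v

/-- `X` is a cell of the stable partition of `(G, c)`. -/
def IsCell (G : SimpleGraph V) {α : Type} (c : V → α) (X : Set V) : Prop :=
  ∃ u : V, X = {v : V | stableRel G c u v}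

/-- The multisets of round-`i` colors on the two sides of the disjoint union `G ⊕g H`
coincide for every `i`, i.e. color refinement does not distinguish `G` and `H`. -/
def crIndist (G : SimpleGraph V) (cG : V → ℕ) (H : SimpleGraph W) (cH : W → ℕ) : Prop :=
  ∀ (i : ℕ) (w : V ⊕ W),
    {u : V | crRel (G ⊕g H) (Sum.elim cG cH) i (Sum.inl u) w}.ncard =
    {v : W | crRel (G ⊕g H) (Sum.elim cG cH) i (Sum.inr v) w}.ncard

/-- `G` (with coloring `cG`) is amenable: any finite colored graph `H` that color
refinement fails to distinguish from `G` is color-preservingly isomorphic to `G`. -/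
def Amenable (G : SimpleGraph V) (cG : V → ℕ) : Prop :=
  ∀ (W : Type) (_ : Fintype W) (H : SimpleGraph W) (cH : W → ℕ),
    crIndist G cG H cH → ∃ φ : G ≃g H, ∀ v : V, cH (φ v) = cG v

/-! ### Induced subgraphs on cells and between cells -/

def CellEmpty (G : SimpleGraph V) (X : Set V) : Prop := ∀ u ∈ X, ∀ v ∈ X, ¬ G.Adj u v

def CellComplete (G : SimpleGraph V) (X : Set V) : Prop :=
  ∀ u ∈ X, ∀ v ∈ X, u ≠ v → G.Adj u v

/-- `G[X]` is a perfect matching `mK₂` on `X`. -/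
def CellMatching (G : SimpleGraph V) (X : Set V) : Prop :=
  ∀ u ∈ X, {v : V | v ∈ X ∧ G.Adj u v}.ncard = 1

/-- `G[X]` is the complement of a perfect matching on `X`. -/
def CellCoMatching (G : SimpleGraph V) (X : Set V) : Prop :=
  ∀ u ∈ X, {v : V | v ∈ X ∧ v ≠ u ∧ ¬ G.Adj u v}.ncard = 1

/-- `G[X]` is the 5-cycle (a 2-regular graph on 5 vertices). -/
def CellC5 (G : SimpleGraph V) (X : Set V) : Prop :=
  X.ncard = 5 ∧ ∀ u ∈ X, {v : V | v ∈ X ∧ G.Adj u v}.ncard = 2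

/-- Condition A. -/
def CondA (G : SimpleGraph V) {α : Type} (c : V → α) : Prop :=
  ∀ X : Set V, IsCell G c X →
    CellEmpty G X ∨ CellComplete G X ∨ CellMatching G X ∨ CellCoMatching G X ∨ CellC5 G X

def BipEmpty (G : SimpleGraph V) (X Y : Set V) : Prop := ∀ u ∈ X, ∀ v ∈ Y, ¬ G.Adj u v

def BipComplete (G : SimpleGraph V) (X Y : Set V) : Prop := ∀ u ∈ X, ∀ v ∈ Y, G.Adj u v

/-- `G[X,Y]` is a disjoint union of stars `sK_{1,t}` with centers `X` and leaves `Y`. -/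
def BipStars (G : SimpleGraph V) (X Y : Set V) : Prop :=
  (∀ v ∈ Y, {u : V | u ∈ X ∧ G.Adj u v}.ncard = 1) ∧
  (∃ t : ℕ, ∀ u ∈ X, {v : V | v ∈ Y ∧ G.Adj u v}.ncard = t)

/-- `G[X,Y]` is the bipartite complement of a disjoint union of stars with centers `X`. -/
def BipCoStars (G : SimpleGraph V) (X Y : Set V) : Prop :=
  (∀ v ∈ Y, {u : V | u ∈ X ∧ ¬ G.Adj u v}.ncard = 1) ∧
  (∃ t : ℕ, ∀ u ∈ X, {v : V | v ∈ Y ∧ ¬ G.Adj u v}.ncard = t)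

/-- Condition B. -/
def CondB (G : SimpleGraph V) {α : Type} (c : V → α) : Prop :=
  ∀ X Y : Set V, IsCell G c X → IsCell G c Y → X ≠ Y →
    BipEmpty G X Y ∨ BipComplete G X Y ∨
    BipStars G X Y ∨ BipStars G Y X ∨ BipCoStars G X Y ∨ BipCoStars G Y X

/-- A cell is heterogeneous if the graph it induces is neither complete nor empty. -/
def Hetero (G : SimpleGraph V) (X : Set V) : Prop :=
  ¬ CellEmpty G X ∧ ¬ CellComplete G X

/-- `{X, Y}` is an anisotropic edge of the cell graph. -/
def AnisoEdge (G : SimpleGraph V) {α : Type} (c : V → α) (X Y : Set V) : Prop :=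
  IsCell G c X ∧ IsCell G c Y ∧ X ≠ Y ∧ ¬ BipEmpty G X Y ∧ ¬ BipComplete G X Y

/-- An anisotropic path in the cell graph, given as the list of its cells. -/
def AnisoPath (G : SimpleGraph V) {α : Type} (c : V → α) (L : List (Set V)) : Prop :=
  (∀ X ∈ L, IsCell G c X) ∧ L.Nodup ∧ L.Chain' (AnisoEdge G c)

/-- Condition C: no uniform anisotropic path connects two heterogeneous cells. -/
def CondC (G : SimpleGraph V) {α : Type} (c : V → α) : Prop :=
  ¬ ∃ (X Y : Set V) (L : List (Set V)) (k : ℕ),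
      AnisoPath G c (X :: (L ++ [Y])) ∧
      (∀ Z ∈ X :: (L ++ [Y]), Z.ncard = k) ∧
      Hetero G X ∧ Hetero G Y

/-- Condition D: the cell graph has no uniform anisotropic cycle. -/
def CondD (G : SimpleGraph V) {α : Type} (c : V → α) : Prop :=
  ¬ ∃ (X : Set V) (L : List (Set V)) (k : ℕ),
      3 ≤ (X :: L).length ∧
      AnisoPath G c (X :: L) ∧
      List.Chain' (AnisoEdge G c) ((X :: L) ++ [X]) ∧
      (∀ Z ∈ X :: L, Z.ncard = k)

/-- Condition E: no anisotropic path `X Y₁ … Y_l Z` with `|X| < |Y₁| = … = |Y_l| > |Z|`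
and no anisotropic cycle `X Y₁ … Y_l X` with `|X| < |Y₁| = … = |Y_l|`. -/
def CondE (G : SimpleGraph V) {α : Type} (c : V → α) : Prop :=
  (¬ ∃ (X Z : Set V) (Ys : List (Set V)) (k : ℕ),
      Ys ≠ [] ∧
      AnisoPath G c (X :: (Ys ++ [Z])) ∧
      (∀ Y ∈ Ys, Y.ncard = k) ∧ X.ncard < k ∧ Z.ncard < k) ∧
  (¬ ∃ (X : Set V) (Ys : List (Set V)) (k : ℕ),
      2 ≤ Ys.length ∧
      AnisoPath G c (X :: Ys) ∧
      List.Chain' (AnisoEdge G c) ((X :: Ys) ++ [X]) ∧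
      (∀ Y ∈ Ys, Y.ncard = k) ∧ X.ncard < k)

/-- Condition F: no anisotropic path `X Y₁ … Y_l` with `|X| < |Y₁| = … = |Y_l|`
whose last cell `Y_l` is heterogeneous. -/
def CondF (G : SimpleGraph V) {α : Type} (c : V → α) : Prop :=
  ¬ ∃ (X : Set V) (Ys : List (Set V)) (Yl : Set V) (k : ℕ),
      Ys ≠ [] ∧
      AnisoPath G c (X :: Ys) ∧
      (∀ Y ∈ Ys, Y.ncard = k) ∧ X.ncard < k ∧
      Ys.getLast? = some Yl ∧ Hetero G Yl

/-- The type of cells of the stable partition. -/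
def Cell (G : SimpleGraph V) {α : Type} (c : V → α) : Type := {X : Set V // IsCell G c X}

/-- The graph on the cells of `Π_G` formed by the anisotropic edges of the cell graph;
its connected components are the anisotropic components of `C(G)`. -/
def anisoGraph (G : SimpleGraph V) {α : Type} (c : V → α) : SimpleGraph (Cell G c) where
  Adj A B := AnisoEdge G c A.val B.val
  symm := by
    refine ⟨?_⟩
    rintro A B ⟨h1, h2, h3, h4, h5⟩
    refine ⟨h2, h1, Ne.symm h3, fun h => h4 ?_, fun h => h5 ?_⟩
    · exact fun u hu v hv hadj => h v hv u hu hadj.symm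
    · exact fun u hu v hv => (h v hv u hu).symm
  loopless := ⟨fun A h => h.2.2.1 rfl⟩

/-- Condition G: every anisotropic component is a tree, and rooting it at any cell `R`
of minimum cardinality in its component, `|X| ≤ |Y|` along edges directed away from `R`. -/
def CondG (G : SimpleGraph V) {α : Type} (c : V → α) : Prop :=
  (anisoGraph G c).IsAcyclic ∧
  ∀ R X Y : Cell G c,
    (∀ Z : Cell G c, (anisoGraph G c).Reachable R Z → R.val.ncard ≤ Z.val.ncard) →
    (anisoGraph G c).Reachable R X →
    (anisoGraph G c).Adj X Y →
    (anisoGraph G c).dist R Y = (anisoGraph G c).dist R X + 1 →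
    X.val.ncard ≤ Y.val.ncard

/-- Condition H: every anisotropic component contains at most one heterogeneous cell,
and such a cell has minimum cardinality within its component. -/
def CondH (G : SimpleGraph V) {α : Type} (c : V → α) : Prop :=
  (∀ X Y : Cell G c, Hetero G X.val → Hetero G Y.val →
      (anisoGraph G c).Reachable X Y → X = Y) ∧
  (∀ X Z : Cell G c, Hetero G X.val →
      (anisoGraph G c).Reachable X Z → X.val.ncard ≤ Z.val.ncard)

/-! ### Matrices, fractional automorphisms and compactness -/

open Classical in
/-- The real adjacency matrix of `G`. -/
noncomputable def adjMat (G : SimpleGraph V) : Matrix V V ℝ :=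
  Matrix.of fun u v => if G.Adj u v then (1 : ℝ) else 0

open Classical in
/-- The permutation matrix of a permutation `σ`. -/
noncomputable def permMat (σ : Equiv.Perm V) : Matrix V V ℝ :=
  Matrix.of fun i j => if σ j = i then (1 : ℝ) else 0

def IsDoublyStochastic [Fintype V] (X : Matrix V V ℝ) : Prop :=
  (∀ i j, 0 ≤ X i j) ∧ (∀ i, ∑ j, X i j = 1) ∧ (∀ j, ∑ i, X i j = 1)

def IsAutomorphism (G : SimpleGraph V) (σ : Equiv.Perm V) : Prop :=
  ∀ u v : V, G.Adj (σ u) (σ v) ↔ G.Adj u v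

/-- `X` is a convex combination of permutation matrices of automorphisms of `G`. -/
def IsConvexCombOfAut [Fintype V] (G : SimpleGraph V) (X : Matrix V V ℝ) : Prop :=
  ∃ (s : Finset (Equiv.Perm V)) (w : Equiv.Perm V → ℝ),
    (∀ σ ∈ s, IsAutomorphism G σ) ∧ (∀ σ ∈ s, 0 ≤ w σ) ∧
    (∑ σ ∈ s, w σ) = 1 ∧ X = ∑ σ ∈ s, w σ • permMat σ

/-- `G` is compact: the polytope of fractional automorphisms of `G` is the convex hull
of the permutation matrices of automorphisms of `G`. -/
def CompactGraph [Fintype V] (G : SimpleGraph V) : Prop :=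
  ∀ X : Matrix V V ℝ, IsDoublyStochastic X → adjMat G * X = X * adjMat G →
    IsConvexCombOfAut G X

/-! ### Equitable partitions, Godsil, Tinhofer, refinable, discrete, unigraphs -/

/-- The partition given by the classes of the equivalence `r` is equitable. -/
def Equitable (G : SimpleGraph V) (r : V → V → Prop) : Prop :=
  ∀ u v w : V, r u v →
    {a : V | G.Adj u a ∧ r a w}.ncard = {a : V | G.Adj v a ∧ r a w}.ncard

/-- The partition given by `r` is the orbit partition of a subgroup of `Aut(G)`. -/
def IsOrbitPartition (G : SimpleGraph V) (r : V → V → Prop) : Prop :=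
  ∃ S : Subgroup (Equiv.Perm V), (∀ σ ∈ S, IsAutomorphism G σ) ∧
    (∀ u v : V, r u v ↔ ∃ σ ∈ S, σ u = v)

/-- `G` is a Godsil graph. -/
def Godsil (G : SimpleGraph V) : Prop :=
  ∀ r : V → V → Prop, Equivalence r → Equitable G r → IsOrbitPartition G r

open Classical in
/-- The coloring of the disjoint union after individualizing the pairs in `F`:
the `j`-th individualized pair gets fresh color `some j`, all other vertices keep
their (uniform) original color `none`. -/
noncomputable def tinColor (F : List (V × W)) : V ⊕ W → Option ℕ
  | Sum.inl u => F.findIdx? (fun p => decide (p.1 = u))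
  | Sum.inr v => F.findIdx? (fun p => decide (p.2 = v))

/-- The stable coloring relation on `G ⊕g H` after individualizing the pairs in `F`. -/
def tinRel (G : SimpleGraph V) (H : SimpleGraph W) (F : List (V × W)) :
    (V ⊕ W) → (V ⊕ W) → Prop :=
  stableRel (G ⊕g H) (tinColor F)

/-- The multisets of stable colors on the two sides agree after individualizing `F`. -/
def tinIndist (G : SimpleGraph V) (H : SimpleGraph W) (F : List (V × W)) : Prop :=
  ∀ w : V ⊕ W,
    {u : V | tinRel G H F (Sum.inl u) w}.ncard =
    {v : W | tinRel G H F (Sum.inr v) w}.ncard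

/-- The pair `p` is a legal individualization choice at the stage reached after `F`. -/
def ValidStep (G : SimpleGraph V) (H : SimpleGraph W) (F : List (V × W)) (p : V × W) : Prop :=
  tinIndist G H F ∧
  tinRel G H F (Sum.inl p.1) (Sum.inr p.2) ∧
  2 ≤ {u' : V | tinRel G H F (Sum.inl u') (Sum.inl p.1)}.ncard ∧
  2 ≤ {v' : W | tinRel G H F (Sum.inr v') (Sum.inr p.2)}.ncard

/-- `F` is a legal sequence of individualization choices of Tinhofer's algorithm. -/
def ValidRun (G : SimpleGraph V) (H : SimpleGraph W) (F : List (V × W)) : Prop :=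
  ∀ j : Fin F.length, ValidStep G H (F.take j.val) (F.get j)

/-- After `F`, all stable color classes are singletons in `G` and in `H`. -/
def AllSingletons (G : SimpleGraph V) (H : SimpleGraph W) (F : List (V × W)) : Prop :=
  (∀ u u' : V, tinRel G H F (Sum.inl u) (Sum.inl u') → u = u') ∧
  (∀ v v' : W, tinRel G H F (Sum.inr v) (Sum.inr v') → v = v')

/-- After `F`, Tinhofer's algorithm stops. -/
def TinTerminal (G : SimpleGraph V) (H : SimpleGraph W) (F : List (V × W)) : Prop :=
  ¬ tinIndist G H F ∨ AllSingletons G H F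

/-- After `F`, Tinhofer's algorithm outputs "isomorphic": the color multisets agree,
all classes are singletons, and the color-matching map is an isomorphism. -/
def TinOutputIso (G : SimpleGraph V) (H : SimpleGraph W) (F : List (V × W)) : Prop :=
  tinIndist G H F ∧ AllSingletons G H F ∧
  (∀ (u u' : V) (v v' : W), tinRel G H F (Sum.inl u) (Sum.inr v) →
     tinRel G H F (Sum.inl u') (Sum.inr v') → (G.Adj u u' ↔ H.Adj v v'))

/-- `G` is a Tinhofer graph: for every finite `H` and every legal complete run of
Tinhofer's individualization-refinement algorithm, the output is correct. -/
def Tinhofer (G : SimpleGraph V) : Prop :=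
  ∀ (W : Type) (_ : Fintype W) (H : SimpleGraph W) (F : List (V × W)),
    ValidRun G H F → TinTerminal G H F →
    (TinOutputIso G H F ↔ Nonempty (G ≃g H))

/-- `G` is refinable: its stable partition is the orbit partition of `Aut(G)`. -/
def Refinable (G : SimpleGraph V) : Prop :=
  ∀ u v : V, stableRel G (fun _ => (0 : ℕ)) u v ↔
    ∃ σ : Equiv.Perm V, IsAutomorphism G σ ∧ σ u = v

/-- `G` is discrete: the stable partition consists of singletons. -/
def Discrete (G : SimpleGraph V) : Prop :=
  ∀ u v : V, stableRel G (fun _ => (0 : ℕ)) u v → u = v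

/-- `G` is a unigraph: it is determined up to isomorphism by its degree sequence. -/
def Unigraph (G : SimpleGraph V) : Prop :=
  ∀ (W : Type) (_ : Fintype W) (H : SimpleGraph W),
    (∃ e : V ≃ W, ∀ v : V, {w : W | H.Adj (e v) w}.ncard = {u : V | G.Adj v u}.ncard) →
    Nonempty (G ≃g H)

/-! ### Concrete graphs -/

/-- The cycle graph on `n` vertices. -/
def cycleG (n : ℕ) : SimpleGraph (Fin n) :=
  SimpleGraph.fromRel (fun u v => (u.val + 1) % n = v.val)

/-- The Petersen graph as the Kneser graph `K(5,2)`. -/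
def petersen : SimpleGraph {s : Finset (Fin 5) // s.card = 2} where
  Adj a b := Disjoint a.val b.val
  symm := ⟨fun _ _ h => h.symm⟩
  loopless := by
    refine ⟨?_⟩
    intro a h
    have h' : Disjoint a.val a.val := h
    rw [disjoint_self] at h'
    have h2 := a.2
    rw [h'] at h2
    simp at h2

/-- The Johnson graph `J(n,2)`. -/
def johnson (n : ℕ) : SimpleGraph {s : Finset (Fin n) // s.card = 2} where
  Adj a b := (a.val ∩ b.val).card = 1
  symm := by
    refine ⟨?_⟩
    intro a b h
    have h' : (a.val ∩ b.val).card = 1 := h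
    show (b.val ∩ a.val).card = 1
    rwa [Finset.inter_comm]
  loopless := by
    refine ⟨?_⟩
    intro a h
    have h' : (a.val ∩ a.val).card = 1 := h
    rw [Finset.inter_self, a.2] at h'
    omega

/-- The cell (as an element of the cell type) containing vertex `u`. -/
def vcell (G : SimpleGraph V) {α : Type} (c : V → α) (u : V) : Cell G c :=
  ⟨{v : V | stableRel G c u v}, ⟨u, rfl⟩⟩

/-- `u` and `v` lie in cells of the same anisotropic component. -/
def SameAnisoComp (G : SimpleGraph V) {α : Type} (c : V → α) (u v : V) : Prop :=
  (anisoGraph G c).Reachable (vcell G c u) (vcell G c v)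

lemma crRel_equiv {V : Type} {α : Type} (G : SimpleGraph V) (c : V → α) :
    ∀ i : ℕ, Equivalence (crRel G c i) := by
  intro i
  induction i with
  | zero => exact ⟨fun _ => rfl, fun h => h.symm, fun h₁ h₂ => h₁.trans h₂⟩
  | succ i ih =>
    refine ⟨fun u => ⟨ih.refl u, fun w => rfl⟩, ?_, ?_⟩
    · rintro u v ⟨h1, h2⟩
      exact ⟨ih.symm h1, fun w => (h2 w).symm⟩
    · rintro u v x ⟨h1, h2⟩ ⟨h3, h4⟩
      exact ⟨ih.trans h1 h3, fun w => (h2 w).trans (h4 w)⟩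

lemma block_aux {V : Type} [Fintype V] (G : SimpleGraph V)
    (c : V → ℕ) (X : Matrix V V ℝ)
    (hds : IsDoublyStochastic X)
    (hcolor : ∀ u v : V, c u ≠ c v → X u v = 0)
    (hcomm : adjMat G * X = X * adjMat G) :
    ∀ (i : ℕ) (u v : V), ¬ crRel G c i u v → X u v = 0 := by
  classical
  obtain ⟨hnn, hrow, hcol⟩ := hds
  intro i
  induction i with
  | zero => exact fun u v h => hcolor u v h
  | succ i IH =>
    intro u v hne
    by_cases hI : crRel G c i u v
    · have hw : ∃ w, {a | G.Adj u a ∧ crRel G c i a w}.ncard ≠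
          {a | G.Adj v a ∧ crRel G c i a w}.ncard := by
        by_contra h
        push_neg at h
        exact hne ⟨hI, h⟩
      obtain ⟨w, hw⟩ := hw
      set D : Finset V := Finset.univ.filter (fun a => crRel G c i a w) with hD
      set f : V → ℝ := fun x => ∑ a ∈ D, adjMat G x a with hf
      have hequiv := crRel_equiv G c i
      -- row sums of X restricted to the class D
      have rowsum : ∀ a : V, ∑ x ∈ D, X a x = if crRel G c i a w then 1 else 0 := by
        intro a
        by_cases ha : crRel G c i a w
        · rw [if_pos ha, ← hrow a]
          apply Finset.sum_subset (Finset.subset_univ D)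
          intro x _ hx
          apply IH
          intro hax
          exact hx (Finset.mem_filter.mpr
            ⟨Finset.mem_univ x, hequiv.trans (hequiv.symm hax) ha⟩)
        · rw [if_neg ha]
          apply Finset.sum_eq_zero
          intro x hx
          apply IH
          intro hax
          exact ha (hequiv.trans hax ((Finset.mem_filter.mp hx).2))
      -- X f = f
      have eq1 : ∀ y : V, ∑ b, X y b * f b = f y := by
        intro y
        have h1 : ∑ b, X y b * f b = ∑ a ∈ D, (X * adjMat G) y a := by
          simp only [hf, Finset.mul_sum, Matrix.mul_apply]
          rw [Finset.sum_comm]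
        rw [h1, ← hcomm]
        calc ∑ a ∈ D, (adjMat G * X) y a
            = ∑ a ∈ D, ∑ b, adjMat G y b * X b a := by
              simp only [Matrix.mul_apply]
          _ = ∑ b, adjMat G y b * ∑ a ∈ D, X b a := by
              rw [Finset.sum_comm]
              simp only [Finset.mul_sum]
          _ = ∑ b, adjMat G y b * (if crRel G c i b w then 1 else 0) := by
              simp_rw [rowsum]
          _ = f y := by
              simp only [mul_ite, mul_one, mul_zero, hf]
              rw [hD]
              exact (Finset.sum_filter _ _).symm
      -- quadratic form argument
      have inner : ∀ y, ∑ z, X y z * (f y - f z)^2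
          = f y ^ 2 - 2 * f y ^ 2 + ∑ z, X y z * f z ^ 2 := by
        intro y
        have h : ∀ z, X y z * (f y - f z)^2
            = f y ^ 2 * X y z - 2 * f y * (X y z * f z) + X y z * f z ^ 2 :=
          fun z => by ring
        simp_rw [h]
        rw [Finset.sum_add_distrib, Finset.sum_sub_distrib, ← Finset.mul_sum, hrow y,
            ← Finset.mul_sum, eq1 y]
        ring
      have quad : ∑ y, ∑ z, X y z * (f y - f z)^2 = 0 := by
        simp_rw [inner]
        rw [Finset.sum_add_distrib, Finset.sum_sub_distrib, Finset.sum_comm]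
        have h : ∀ z, ∑ y, X y z * f z ^ 2 = f z ^ 2 := by
          intro z; rw [← Finset.sum_mul, hcol z, one_mul]
        simp_rw [h]
        rw [← Finset.mul_sum]
        ring
      have hterm : X u v * (f u - f v)^2 = 0 := by
        have h1 : ∀ y ∈ Finset.univ, (0:ℝ) ≤ ∑ z, X y z * (f y - f z)^2 :=
          fun y _ => Finset.sum_nonneg fun z _ => mul_nonneg (hnn y z) (sq_nonneg _)
        have h2 := (Finset.sum_eq_zero_iff_of_nonneg h1).mp quad u (Finset.mem_univ u)
        have h3 : ∀ z ∈ Finset.univ, (0:ℝ) ≤ X u z * (f u - f z)^2 :=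
          fun z _ => mul_nonneg (hnn u z) (sq_nonneg _)
        exact (Finset.sum_eq_zero_iff_of_nonneg h3).mp h2 v (Finset.mem_univ v)
      have hfcard : ∀ y : V, f y = (({a | G.Adj y a ∧ crRel G c i a w}).ncard : ℝ) := by
        intro y
        have h1 : {a | G.Adj y a ∧ crRel G c i a w} =
            ↑(D.filter (fun a => G.Adj y a)) := by
          ext a
          simp only [hD, Finset.coe_filter, Finset.mem_filter, Finset.mem_univ, true_and,
            Set.mem_setOf_eq]
          tauto
        rw [h1, Set.ncard_coe_finset, hf]
        simp only [adjMat, Matrix.of_apply]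
        rw [Finset.sum_boole]
      have hfne : f u ≠ f v := by
        rw [hfcard u, hfcard v]
        exact fun h => hw (Nat.cast_injective h)
      rcases mul_eq_zero.mp hterm with h | h
      · exact h
      · exact absurd (sub_eq_zero.mp (sq_eq_zero_iff.mp h)) hfne
    · exact IH u v hI

theorem fractional_aut_block_diagonal {V : Type} [Fintype V] (G : SimpleGraph V)
    (c : V → ℕ) (X : Matrix V V ℝ)
    (hds : IsDoublyStochastic X)
    (hcolor : ∀ u v : V, c u ≠ c v → X u v = 0)
    (hcomm : adjMat G * X = X * adjMat G) :
    ∀ u v : V, ¬ stableRel G c u v → X u v = 0 := by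
  intro u v h
  simp only [stableRel, not_forall] at h
  obtain ⟨i, hi⟩ := h
  exact block_aux G c X hds hcolor hcomm i u v hi

end ColorRef
end

section
/- The Petersen graph has no equitable partition in which the minimum cardinality of a cell equals 3; in particular, no equitable partition of the Petersen graph contains a cell of size 3 unless it also contains a smaller cell. -/
namespace ColorRef

variable {V W : Type}

open Finset

abbrev PVx := {s : Finset (Fin 5) // s.card = 2}

instance : DecidableRel petersen.Adj := fun a b =>
  inferInstanceAs (Decidable (Disjoint a.val b.val))

lemma pet_card : Fintype.card PVx = 10 := by decide
lemma pet_deg : ∀ u : PVx, (univ.filter (petersen.Adj u)).card = 3 := by decide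
lemma pet_tri : ∀ a b c : PVx, petersen.Adj a b → petersen.Adj a c → petersen.Adj b c → False := by decide
lemma pet_common : ∀ u v : PVx, u ≠ v →
    (univ.filter (fun w => petersen.Adj u w ∧ petersen.Adj v w)).card ≤ 1 := by decide

lemma ncard_filter {α : Type} [Fintype α] (p : α → Prop) [DecidablePred p] :
    {v | p v}.ncard = (Finset.univ.filter p).card := by
  rw [Set.ncard_eq_toFinset_card', Set.toFinset_setOf]

lemma dc {α : Type} [Fintype α] [DecidableEq α] (G : SimpleGraph α) [DecidableRel G.Adj]
    (X Y : Finset α) :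
    ∑ x ∈ X, (Y.filter (G.Adj x)).card = ∑ y ∈ Y, (X.filter (fun x => G.Adj y x)).card := by
  simp only [Finset.card_filter]
  rw [Finset.sum_comm]
  refine Finset.sum_congr rfl fun y _ => Finset.sum_congr rfl fun x _ => ?_
  simp [G.adj_comm]

lemma arith1 (k s t : ℕ) (hk : 3 ≤ k) (hk7 : k ≤ 7) (ht : 1 ≤ t) (ht3 : t ≤ 3)
    (hs : s ≤ 3) (h : 3 * s = k * t) : k = 6 ∨ (k = 3 ∧ s = t) := by
  interval_cases k <;> interval_cases t <;> omega

lemma arith2 (k s t : ℕ) (hk : 3 ≤ k) (hk4 : k ≤ 4) (ht : 1 ≤ t) (ht3 : t ≤ 3)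
    (hs : s ≤ 3) (h : 3 * s = k * t) : k = 3 := by
  interval_cases k <;> interval_cases t <;> omega


theorem petersen_no_equitable_min_three :
    ¬ ∃ r : {s : Finset (Fin 5) // s.card = 2} → {s : Finset (Fin 5) // s.card = 2} → Prop,
        Equivalence r ∧ Equitable petersen r ∧
        (∀ u, 3 ≤ {v | r u v}.ncard) ∧ (∃ u, {v | r u v}.ncard = 3) := by
  classical
  rintro ⟨r, hequiv, hequit, hmin, u₀, hu₀⟩
  set G := petersen with hG
  set C : PVx → Finset PVx := fun u => univ.filter (fun v => r u v) with hC
  have hmemC : ∀ u v : PVx, v ∈ C u ↔ r u v := by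
    intro u v; simp [hC]
  have hCself : ∀ u : PVx, u ∈ C u := fun u => (hmemC u u).2 (hequiv.refl u)
  have hCdisj : ∀ u v : PVx, ¬ r u v → Disjoint (C u) (C v) := by
    intro u v huv
    rw [Finset.disjoint_left]
    intro a ha hb
    exact huv (hequiv.trans ((hmemC u a).1 ha) (hequiv.symm ((hmemC v a).1 hb)))
  have hcardC : ∀ u : PVx, {v | r u v}.ncard = (C u).card := by
    intro u; rw [hC]; exact ncard_filter _
  have hbridge : ∀ u w : PVx, {a | G.Adj u a ∧ r a w}.ncard = ((C w).filter (G.Adj u)).card := by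
    intro u w
    rw [ncard_filter]
    congr 1
    ext a
    simp only [Finset.mem_filter, Finset.mem_univ, true_and, hmemC]
    exact ⟨fun ⟨h1, h2⟩ => ⟨hequiv.symm h2, h1⟩, fun ⟨h1, h2⟩ => ⟨h2, hequiv.symm h1⟩⟩
  have hdeg : ∀ u v w : PVx, r u v →
      ((C w).filter (G.Adj u)).card = ((C w).filter (G.Adj v)).card := by
    intro u v w huv
    rw [← hbridge, ← hbridge]
    exact hequit u v w huv
  have hedge : ∀ u w : PVx,
      (C u).card * ((C w).filter (G.Adj u)).card
        = (C w).card * ((C u).filter (G.Adj w)).card := by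
    intro u w
    have e1 : ∑ x ∈ C u, ((C w).filter (G.Adj x)).card
        = (C u).card * ((C w).filter (G.Adj u)).card := by
      rw [Finset.sum_congr rfl fun x hx => hdeg x u w (hequiv.symm ((hmemC u x).1 hx))]
      rw [Finset.sum_const, smul_eq_mul]
    have e2 : ∑ y ∈ C w, ((C u).filter (fun x => G.Adj y x)).card
        = (C w).card * ((C u).filter (G.Adj w)).card := by
      rw [Finset.sum_congr rfl fun y hy => hdeg y w u (hequiv.symm ((hmemC w y).1 hy))]
      rw [Finset.sum_const, smul_eq_mul]
    rw [← e1, ← e2]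
    exact dc G (C u) (C w)
  have hX3 : (C u₀).card = 3 := by rw [← hcardC]; exact hu₀
  have hmin' : ∀ u : PVx, 3 ≤ (C u).card := by
    intro u; rw [← hcardC]; exact hmin u
  set X := C u₀ with hXdef
  have hu10 : (univ : Finset PVx).card = 10 := by rw [Finset.card_univ]; exact pet_card
  -- Step A: X induces no edges at u₀
  have hd0 : (X.filter (G.Adj u₀)).card = 0 := by
    obtain ⟨a, b, c, hab, hac, hbc, hXabc⟩ := Finset.card_eq_three.1 hX3
    have hmema : a ∈ X := by rw [hXabc]; simp
    have hmemb : b ∈ X := by rw [hXabc]; simp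
    have hmemc : c ∈ X := by rw [hXabc]; simp
    have hconst : ∀ x ∈ X, ∀ y ∈ X, (X.filter (G.Adj x)).card = (X.filter (G.Adj y)).card := by
      intro x hx y hy
      exact hdeg x y u₀ (hequiv.trans (hequiv.symm ((hmemC u₀ x).1 hx)) ((hmemC u₀ y).1 hy))
    have key : ¬ G.Adj a b ∧ ¬ G.Adj a c ∧ ¬ G.Adj b c := by
      by_cases h1 : G.Adj a b <;> by_cases h2 : G.Adj a c <;> by_cases h3 : G.Adj b c
      · exact absurd h3 (fun h => pet_tri a b c h1 h2 h)
      all_goals (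
        first
        | exact ⟨h1, h2, h3⟩
        | (exfalso
           have eab := hconst a hmema b hmemb
           have eac := hconst a hmema c hmemc
           rw [hXabc] at eab eac
           simp only [Finset.filter_insert, Finset.filter_singleton, h1, h2, h3,
             (G.adj_comm b a), (G.adj_comm c a), (G.adj_comm c b), G.irrefl,
             if_true, if_false, Finset.card_insert_of_notMem,
             Finset.mem_singleton, Finset.mem_insert, Finset.card_singleton,
             Finset.card_empty, hab, hac, hbc, not_false_iff, Finset.notMem_empty,
             or_false] at eab eac
           omega))
    have hfe : X.filter (G.Adj u₀) = ∅ := by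
      rw [Finset.filter_eq_empty_iff]
      intro x hx
      have hu0X : u₀ ∈ X := hCself u₀
      rw [hXabc] at hx hu0X
      simp only [Finset.mem_insert, Finset.mem_singleton] at hx hu0X
      rcases hu0X with h | h | h <;> rcases hx with h' | h' | h' <;> subst h <;> subst h' <;>
        first
          | exact G.irrefl
          | exact key.1 | exact key.2.1 | exact key.2.2
          | exact fun hadj => key.1 hadj.symm
          | exact fun hadj => key.2.1 hadj.symm
          | exact fun hadj => key.2.2 hadj.symm
    rw [hfe]; rfl
  have hnoadjX : ∀ x ∈ X, ¬ G.Adj u₀ x := by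
    intro x hx hadj
    have hm : x ∈ X.filter (G.Adj u₀) := Finset.mem_filter.2 ⟨hx, hadj⟩
    rw [Finset.card_eq_zero.1 hd0] at hm
    exact Finset.notMem_empty x hm
  -- first neighbor
  have hNcard : (univ.filter (G.Adj u₀)).card = 3 := pet_deg u₀
  have hNne : (univ.filter (G.Adj u₀)).Nonempty := by
    rw [← Finset.card_pos, hNcard]; norm_num
  obtain ⟨w₁, hw₁mem⟩ := hNne
  have hadj₁ : G.Adj u₀ w₁ := (Finset.mem_filter.1 hw₁mem).2
  have hnr₁ : ¬ r u₀ w₁ := fun h => hnoadjX w₁ ((hmemC u₀ w₁).2 h) hadj₁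
  set Y₁ := C w₁ with hY₁def
  have hdisj₁ : Disjoint X Y₁ := hCdisj u₀ w₁ hnr₁
  have ht₁ : 1 ≤ (X.filter (G.Adj w₁)).card :=
    Finset.card_pos.2 ⟨u₀, Finset.mem_filter.2 ⟨hCself u₀, hadj₁.symm⟩⟩
  have ht₁3 : (X.filter (G.Adj w₁)).card ≤ 3 := by
    calc (X.filter (G.Adj w₁)).card ≤ X.card := Finset.card_le_card (Finset.filter_subset _ _)
    _ = 3 := hX3
  have hs₁3 : (Y₁.filter (G.Adj u₀)).card ≤ 3 := by
    calc (Y₁.filter (G.Adj u₀)).card ≤ (univ.filter (G.Adj u₀)).card :=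
          Finset.card_le_card (Finset.filter_subset_filter _ (Finset.subset_univ _))
    _ = 3 := hNcard
  have hk₁7 : Y₁.card ≤ 7 := by
    have h1 := Finset.card_le_univ (X ∪ Y₁)
    rw [Finset.card_union_of_disjoint hdisj₁, hX3] at h1
    have := pet_card
    omega
  have heq₁ : 3 * (Y₁.filter (G.Adj u₀)).card = Y₁.card * (X.filter (G.Adj w₁)).card := by
    have e := hedge u₀ w₁
    rw [← hXdef, ← hY₁def, hX3] at e
    exact e
  rcases arith1 Y₁.card _ _ (hmin' w₁) hk₁7 ht₁ ht₁3 hs₁3 heq₁ with hk6 | ⟨hk3, hst⟩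
  · -- |Y₁| = 6 : leftover vertex
    obtain ⟨z, hz⟩ : ∃ z : PVx, z ∉ X ∪ Y₁ := by
      by_contra h
      push_neg at h
      have hsub : (univ : Finset PVx) ⊆ X ∪ Y₁ := fun z _ => h z
      have := Finset.card_le_card hsub
      rw [Finset.card_union_of_disjoint hdisj₁, hX3, hk6, hu10] at this
      omega
    simp only [Finset.mem_union, not_or] at hz
    have hnrz : ¬ r u₀ z := fun h => hz.1 ((hmemC u₀ z).2 h)
    have hnrz1 : ¬ r w₁ z := fun h => hz.2 ((hmemC w₁ z).2 h)
    have hdzu : Disjoint (C z) (X ∪ Y₁) :=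
      Finset.disjoint_union_right.2 ⟨(hCdisj u₀ z hnrz).symm, (hCdisj w₁ z hnrz1).symm⟩
    have h1 := Finset.card_le_univ (C z ∪ (X ∪ Y₁))
    rw [Finset.card_union_of_disjoint hdzu, Finset.card_union_of_disjoint hdisj₁,
      hX3, hk6] at h1
    have := hmin' z
    have := pet_card
    omega
  · -- |Y₁| = 3
    by_cases hs3 : (Y₁.filter (G.Adj u₀)).card = 3
    · -- complete bipartite X-Y₁ : common neighbours contradiction
      obtain ⟨x, hxX, hxne⟩ := Finset.exists_mem_ne (by omega : 1 < X.card) u₀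
      have hsx : (Y₁.filter (G.Adj x)).card = 3 := by
        rw [← hdeg u₀ x w₁ ((hmemC u₀ x).1 hxX)]
        exact hs3
      have hfu : Y₁.filter (G.Adj u₀) = Y₁ :=
        Finset.eq_of_subset_of_card_le (Finset.filter_subset _ _) (by omega)
      have hfx : Y₁.filter (G.Adj x) = Y₁ :=
        Finset.eq_of_subset_of_card_le (Finset.filter_subset _ _) (by omega)
      have hsubc : Y₁ ⊆ univ.filter (fun w => G.Adj u₀ w ∧ G.Adj x w) := by
        intro y hy
        refine Finset.mem_filter.2 ⟨Finset.mem_univ y, ?_, ?_⟩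
        · have hy' : y ∈ Y₁.filter (G.Adj u₀) := by rw [hfu]; exact hy
          exact (Finset.mem_filter.1 hy').2
        · have hy' : y ∈ Y₁.filter (G.Adj x) := by rw [hfx]; exact hy
          exact (Finset.mem_filter.1 hy').2
      have h1 := Finset.card_le_card hsubc
      have h2 : (univ.filter (fun w => G.Adj u₀ w ∧ G.Adj x w)).card ≤ 1 :=
        pet_common u₀ x (Ne.symm hxne)
      have h3 := h1.trans h2
      omega
    · -- u₀ has a neighbour outside X ∪ Y₁
      obtain ⟨w₂, hadj₂, hw₂X, hw₂Y₁⟩ : ∃ w₂, G.Adj u₀ w₂ ∧ w₂ ∉ X ∧ w₂ ∉ Y₁ := by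
        by_contra h
        push_neg at h
        have hsub : univ.filter (G.Adj u₀) ⊆ X.filter (G.Adj u₀) ∪ Y₁.filter (G.Adj u₀) := by
          intro w hw
          have hadj := (Finset.mem_filter.1 hw).2
          by_cases hX : w ∈ X
          · exact Finset.mem_union_left _ (Finset.mem_filter.2 ⟨hX, hadj⟩)
          · exact Finset.mem_union_right _ (Finset.mem_filter.2 ⟨h w hadj hX, hadj⟩)
        have h1 := Finset.card_le_card hsub
        have h2 := Finset.card_union_le (X.filter (G.Adj u₀)) (Y₁.filter (G.Adj u₀))
        omega
      have hnr₂ : ¬ r u₀ w₂ := fun h => hw₂X ((hmemC u₀ w₂).2 h)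
      have hnr₁₂ : ¬ r w₁ w₂ := fun h => hw₂Y₁ ((hmemC w₁ w₂).2 h)
      set Y₂ := C w₂ with hY₂def
      have hdisj₂ : Disjoint X Y₂ := hCdisj u₀ w₂ hnr₂
      have hdisj₁₂ : Disjoint Y₁ Y₂ := hCdisj w₁ w₂ hnr₁₂
      have hdXY : Disjoint (X ∪ Y₁) Y₂ := Finset.disjoint_union_left.2 ⟨hdisj₂, hdisj₁₂⟩
      have ht₂ : 1 ≤ (X.filter (G.Adj w₂)).card :=
        Finset.card_pos.2 ⟨u₀, Finset.mem_filter.2 ⟨hCself u₀, hadj₂.symm⟩⟩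
      have ht₂3 : (X.filter (G.Adj w₂)).card ≤ 3 := by
        calc (X.filter (G.Adj w₂)).card ≤ X.card := Finset.card_le_card (Finset.filter_subset _ _)
        _ = 3 := hX3
      have hs₂3 : (Y₂.filter (G.Adj u₀)).card ≤ 3 := by
        calc (Y₂.filter (G.Adj u₀)).card ≤ (univ.filter (G.Adj u₀)).card :=
              Finset.card_le_card (Finset.filter_subset_filter _ (Finset.subset_univ _))
        _ = 3 := hNcard
      have hk₂4 : Y₂.card ≤ 4 := by
        have h1 := Finset.card_le_univ ((X ∪ Y₁) ∪ Y₂)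
        rw [Finset.card_union_of_disjoint hdXY, Finset.card_union_of_disjoint hdisj₁,
          hX3, hk3] at h1
        have := pet_card
        omega
      have heq₂ : 3 * (Y₂.filter (G.Adj u₀)).card = Y₂.card * (X.filter (G.Adj w₂)).card := by
        have e := hedge u₀ w₂
        rw [← hXdef, ← hY₂def, hX3] at e
        exact e
      have hk₂3 : Y₂.card = 3 := arith2 Y₂.card _ _ (hmin' w₂) hk₂4 ht₂ ht₂3 hs₂3 heq₂
      -- leftover vertex
      obtain ⟨z, hz⟩ : ∃ z : PVx, z ∉ (X ∪ Y₁) ∪ Y₂ := by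
        by_contra h
        push_neg at h
        have hsub : (univ : Finset PVx) ⊆ (X ∪ Y₁) ∪ Y₂ := fun z _ => h z
        have := Finset.card_le_card hsub
        rw [Finset.card_union_of_disjoint hdXY, Finset.card_union_of_disjoint hdisj₁,
          hX3, hk3, hk₂3, hu10] at this
        omega
      simp only [Finset.mem_union, not_or] at hz
      have hnrz : ¬ r u₀ z := fun h => hz.1.1 ((hmemC u₀ z).2 h)
      have hnrz1 : ¬ r w₁ z := fun h => hz.1.2 ((hmemC w₁ z).2 h)
      have hnrz2 : ¬ r w₂ z := fun h => hz.2 ((hmemC w₂ z).2 h)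
      have hdz : Disjoint (C z) ((X ∪ Y₁) ∪ Y₂) :=
        Finset.disjoint_union_right.2
          ⟨Finset.disjoint_union_right.2 ⟨(hCdisj u₀ z hnrz).symm, (hCdisj w₁ z hnrz1).symm⟩,
            (hCdisj w₂ z hnrz2).symm⟩
      have h1 := Finset.card_le_univ (C z ∪ ((X ∪ Y₁) ∪ Y₂))
      rw [Finset.card_union_of_disjoint hdz, Finset.card_union_of_disjoint hdXY,
        Finset.card_union_of_disjoint hdisj₁, hX3, hk3, hk₂3] at h1
      have := hmin' z
      have := pet_card
      omega


end ColorRef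
end
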